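/- arXiv:1306.1449 — 2 statements merged into one kernel-verified Lean document; each statement's English description precedes it below -/
import Mathlib

section
/- Let u be a classical 1-periodic solution of the quasi-linear surface wave equation on [0,T) and set S(t) = sup_{x∈ℝ} u_x(x,t). Then for almost every t ∈ (0,T), S is differentiable at t and, for any point ξ(t) at which u_x(·,t) attains its maximum S(t), one has S'(t) − (7/2)·ε·S(t)² = −(12/μ)·(P∗g(u(·,t)))(ξ(t)) + (12/μ)·g(u(·,t))(ξ(t)). -/
/-- The 1-periodic Green's function of the operator `1 - (μ/12)∂ₓ²`. -/
noncomputable def P (μ x : ℝ) : ℝ :=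
  Real.sqrt (3/μ) *
    (Real.exp (2 * Real.sqrt (3/μ) * (x - ⌊x⌋)) +
     Real.exp (2 * Real.sqrt (3/μ) * (1 - (x - ⌊x⌋)))) /
  (Real.exp (2 * Real.sqrt (3/μ)) - 1)

/-- Periodic convolution with the kernel `P` over one period. -/
noncomputable def pconv (μ : ℝ) (h : ℝ → ℝ) (x : ℝ) : ℝ :=
  ∫ y in (0:ℝ)..1, P μ (x - y) * h y

/-- The nonlinearity `g(w) = 2w + (5/2)εw² - (1/8)ε²w³ + (3/64)ε³w⁴ - (7/48)εμ(wₓ)²`,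
with the derivative `w'` supplied explicitly. -/
noncomputable def gfun (ε μ : ℝ) (w w' : ℝ → ℝ) (x : ℝ) : ℝ :=
  2 * w x + (5/2) * ε * (w x)^2 - (1/8) * ε^2 * (w x)^3 + (3/64) * ε^3 * (w x)^4
    - (7/48) * ε * μ * (w' x)^2

/-- A classical 1-periodic solution of the quasi-linear surface wave equation
`u_t - u_x - (7/2)ε u u_x + ∂ₓ(P∗g(u)) = 0` on `ℝ × [0,T)`, recorded together with the
partial derivatives `u_x`, `u_{xx}`, `u_t`, `u_{tx}`. -/
structure QLSol (ε μ T : ℝ) where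
  u : ℝ → ℝ → ℝ
  ux : ℝ → ℝ → ℝ
  uxx : ℝ → ℝ → ℝ
  ut : ℝ → ℝ → ℝ
  utx : ℝ → ℝ → ℝ
  periodic : ∀ t ∈ Set.Ico (0:ℝ) T, Function.Periodic (fun x => u x t) 1
  hux : ∀ (x : ℝ), ∀ t ∈ Set.Ico (0:ℝ) T, HasDerivAt (fun x' => u x' t) (ux x t) x
  huxx : ∀ (x : ℝ), ∀ t ∈ Set.Ico (0:ℝ) T, HasDerivAt (fun x' => ux x' t) (uxx x t) x
  hut : ∀ (x : ℝ), ∀ t ∈ Set.Ico (0:ℝ) T,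
    HasDerivWithinAt (fun t' => u x t') (ut x t) (Set.Ico (0:ℝ) T) t
  hutx : ∀ (x : ℝ), ∀ t ∈ Set.Ico (0:ℝ) T,
    HasDerivWithinAt (fun t' => ux x t') (utx x t) (Set.Ico (0:ℝ) T) t
  contu : ContinuousOn (fun p : ℝ × ℝ => u p.1 p.2) (Set.univ ×ˢ Set.Ico (0:ℝ) T)
  contux : ContinuousOn (fun p : ℝ × ℝ => ux p.1 p.2) (Set.univ ×ˢ Set.Ico (0:ℝ) T)
  contuxx : ContinuousOn (fun p : ℝ × ℝ => uxx p.1 p.2) (Set.univ ×ˢ Set.Ico (0:ℝ) T)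
  contut : ContinuousOn (fun p : ℝ × ℝ => ut p.1 p.2) (Set.univ ×ˢ Set.Ico (0:ℝ) T)
  contutx : ContinuousOn (fun p : ℝ × ℝ => utx p.1 p.2) (Set.univ ×ˢ Set.Ico (0:ℝ) T)
  eqn : ∀ (x : ℝ), ∀ t ∈ Set.Ico (0:ℝ) T,
    ut x t - ux x t - (7/2) * ε * u x t * ux x t
      + deriv (pconv μ (gfun ε μ (fun x' => u x' t) (fun x' => ux x' t))) x = 0

open MeasureTheory intervalIntegral Set Filter Function

lemma P_add_one (μ x : ℝ) : P μ (x + 1) = P μ x := by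
  unfold P
  rw [Int.floor_add_one]
  push_cast
  ring_nf

noncomputable def sq3 (μ : ℝ) : ℝ := Real.sqrt (3/μ)

noncomputable def AA (μ : ℝ) (h : ℝ → ℝ) (x : ℝ) : ℝ :=
  ∫ y in (0:ℝ)..x, Real.exp (-(2 * sq3 μ) * y) * h y

noncomputable def BB (μ : ℝ) (h : ℝ → ℝ) (x : ℝ) : ℝ :=
  ∫ y in (0:ℝ)..x, Real.exp ((2 * sq3 μ) * y) * h y

noncomputable def Phi (μ : ℝ) (h : ℝ → ℝ) (x : ℝ) : ℝ :=
  (sq3 μ / (Real.exp (2 * sq3 μ) - 1)) *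
    (Real.exp (2 * sq3 μ * x) *
        (AA μ h x * (1 - Real.exp (2 * sq3 μ)) + Real.exp (2 * sq3 μ) * AA μ h 1)
     + Real.exp (-(2 * sq3 μ) * x) *
        (BB μ h x * (Real.exp (2 * sq3 μ) - 1) + BB μ h 1))

noncomputable def Psi (μ : ℝ) (h : ℝ → ℝ) (x : ℝ) : ℝ :=
  (sq3 μ / (Real.exp (2 * sq3 μ) - 1)) * (2 * sq3 μ) *
    (Real.exp (2 * sq3 μ * x) *
        (AA μ h x * (1 - Real.exp (2 * sq3 μ)) + Real.exp (2 * sq3 μ) * AA μ h 1)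
     - Real.exp (-(2 * sq3 μ) * x) *
        (BB μ h x * (Real.exp (2 * sq3 μ) - 1) + BB μ h 1))

variable {μ : ℝ} {h : ℝ → ℝ}

lemma hasDerivAt_AA (hh : Continuous h) (x : ℝ) :
    HasDerivAt (AA μ h) (Real.exp (-(2 * sq3 μ) * x) * h x) x := by
  have hc : Continuous fun y => Real.exp (-(2 * sq3 μ) * y) * h y := by fun_prop
  exact integral_hasDerivAt_right (hc.intervalIntegrable _ _)
    hc.aestronglyMeasurable.stronglyMeasurableAtFilter hc.continuousAt

lemma hasDerivAt_BB (hh : Continuous h) (x : ℝ) :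
    HasDerivAt (BB μ h) (Real.exp ((2 * sq3 μ) * x) * h x) x := by
  have hc : Continuous fun y => Real.exp ((2 * sq3 μ) * y) * h y := by fun_prop
  exact integral_hasDerivAt_right (hc.intervalIntegrable _ _)
    hc.aestronglyMeasurable.stronglyMeasurableAtFilter hc.continuousAt

lemma exp_mul_exp_neg (a x : ℝ) : Real.exp (2 * a * x) * Real.exp (-(2 * a) * x) = 1 := by
  rw [← Real.exp_add, show 2 * a * x + -(2 * a) * x = 0 by ring, Real.exp_zero]

lemma hasDerivAt_Phi (hh : Continuous h) (x : ℝ) :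
    HasDerivAt (Phi μ h) (Psi μ h x) x := by
  set a := sq3 μ
  have he1 : HasDerivAt (fun x : ℝ => Real.exp (2 * a * x)) (Real.exp (2 * a * x) * (2 * a)) x := by
    simpa [mul_comm] using (((hasDerivAt_id x).const_mul (2 * a)).exp)
  have he2 : HasDerivAt (fun x : ℝ => Real.exp (-(2 * a) * x))
      (Real.exp (-(2 * a) * x) * (-(2 * a))) x := by
    simpa [mul_comm] using (((hasDerivAt_id x).const_mul (-(2 * a))).exp)
  have hA := hasDerivAt_AA hh x (μ := μ)
  have hB := hasDerivAt_BB hh x (μ := μ)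
  have hα : HasDerivAt (fun x => AA μ h x * (1 - Real.exp (2 * a)) + Real.exp (2 * a) * AA μ h 1)
      (Real.exp (-(2 * a) * x) * h x * (1 - Real.exp (2 * a))) x :=
    (hA.mul_const _).add_const _
  have hβ : HasDerivAt (fun x => BB μ h x * (Real.exp (2 * a) - 1) + BB μ h 1)
      (Real.exp ((2 * a) * x) * h x * (Real.exp (2 * a) - 1)) x :=
    (hB.mul_const _).add_const _
  have H := (((he1.mul hα).add (he2.mul hβ)).const_mul (a / (Real.exp (2 * a) - 1)))
  have hpq := exp_mul_exp_neg a x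
  refine H.congr_deriv (Eq.symm ?_)
  unfold Psi
  ring

example : True := trivial

lemma hasDerivAt_Psi (hμ : 0 < μ) (hh : Continuous h) (x : ℝ) :
    HasDerivAt (Psi μ h) (12/μ * (Phi μ h x - h x)) x := by
  set a := sq3 μ with ha_def
  have ha2 : a * a = 3/μ := Real.mul_self_sqrt (by positivity)
  have ha : 0 < a := Real.sqrt_pos.mpr (by positivity)
  have hE : Real.exp (2 * a) - 1 ≠ 0 := by
    have h1 : (1:ℝ) < Real.exp (2 * a) := Real.one_lt_exp_iff.mpr (by linarith)
    linarith
  have he1 : HasDerivAt (fun x : ℝ => Real.exp (2 * a * x)) (Real.exp (2 * a * x) * (2 * a)) x := by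
    simpa [mul_comm] using (((hasDerivAt_id x).const_mul (2 * a)).exp)
  have he2 : HasDerivAt (fun x : ℝ => Real.exp (-(2 * a) * x))
      (Real.exp (-(2 * a) * x) * (-(2 * a))) x := by
    simpa [mul_comm] using (((hasDerivAt_id x).const_mul (-(2 * a))).exp)
  have hA := hasDerivAt_AA hh x (μ := μ)
  have hB := hasDerivAt_BB hh x (μ := μ)
  have hα : HasDerivAt (fun x => AA μ h x * (1 - Real.exp (2 * a)) + Real.exp (2 * a) * AA μ h 1)
      (Real.exp (-(2 * a) * x) * h x * (1 - Real.exp (2 * a))) x :=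
    (hA.mul_const _).add_const _
  have hβ : HasDerivAt (fun x => BB μ h x * (Real.exp (2 * a) - 1) + BB μ h 1)
      (Real.exp ((2 * a) * x) * h x * (Real.exp (2 * a) - 1)) x :=
    (hB.mul_const _).add_const _
  have H := (((he1.mul hα).sub (he2.mul hβ)).const_mul (a / (Real.exp (2 * a) - 1) * (2 * a)))
  have hpq := exp_mul_exp_neg a x
  have hC : a / (Real.exp (2 * a) - 1) * (Real.exp (2 * a) - 1) = a := div_mul_cancel₀ a hE
  have hm : 12/μ = 4*(a*a) := by rw [ha2]; ring
  refine H.congr_deriv (Eq.symm ?_)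
  unfold Phi
  set p := Real.exp (2 * a * x)
  set q := Real.exp (-(2 * a) * x)
  set E2 := Real.exp (2 * a)
  set A1 := AA μ h x * (1 - E2) + E2 * AA μ h 1
  set B1 := BB μ h x * (E2 - 1) + BB μ h 1
  set C := a / (E2 - 1)
  linear_combination (C*(p*A1 + q*B1) - h x)*hm + (4*a*C*(h x)*(E2-1))*hpq + (4*a*(h x))*hC

example : True := trivial

lemma intervalIntegrable_congr_of_eqOn {f g : ℝ → ℝ} {a b : ℝ}
    (hfg : Set.EqOn f g (Set.uIcc a b)) (hg : IntervalIntegrable g volume a b) :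
    IntervalIntegrable f volume a b := by
  rw [intervalIntegrable_iff] at hg ⊢
  exact hg.congr_fun (fun y hy => (hfg (Set.uIoc_subset_uIcc hy)).symm) measurableSet_uIoc

lemma pconv_eq_Phi (hμ : 0 < μ) (hh : Continuous h) {x : ℝ} (hx : x ∈ Ioo (0:ℝ) 1) :
    pconv μ h x = Phi μ h x := by
  obtain ⟨hx0, hx1⟩ := hx
  set a := sq3 μ with ha_def
  have ha : 0 < a := Real.sqrt_pos.mpr (by positivity)
  set E2 := Real.exp (2 * a) with hE2_def
  have hsq : Real.sqrt (3/μ) = a := rfl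
  set C := a / (E2 - 1) with hC_def
  set f1 : ℝ → ℝ := fun y =>
    (C * (Real.exp (2*a*x) * Real.exp (-(2*a)*y) + E2 * (Real.exp (-(2*a)*x) * Real.exp ((2*a)*y)))) * h y
    with hf1_def
  set f2 : ℝ → ℝ := fun y =>
    (C * (E2 * (Real.exp (2*a*x) * Real.exp (-(2*a)*y)) + Real.exp (-(2*a)*x) * Real.exp ((2*a)*y))) * h y
    with hf2_def
  have hf1c : Continuous f1 := by rw [hf1_def]; fun_prop
  have hf2c : Continuous f2 := by rw [hf2_def]; fun_prop
  have e1 : Set.EqOn (fun y => P μ (x - y) * h y) f1 (Set.uIcc 0 x) := by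
    rw [Set.uIcc_of_le hx0.le]
    intro y hy
    obtain ⟨hy0, hyx⟩ := hy
    have hfl : ⌊x - y⌋ = 0 := Int.floor_eq_zero_iff.mpr ⟨by linarith, by linarith⟩
    have k1 : Real.exp (2*a*((x - y) - (0:ℤ))) = Real.exp (2*a*x) * Real.exp (-(2*a)*y) := by
      rw [← Real.exp_add]; norm_num; ring_nf
    have k2 : Real.exp (2*a*(1 - ((x - y) - (0:ℤ)))) =
        E2 * (Real.exp (-(2*a)*x) * Real.exp ((2*a)*y)) := by
      rw [hE2_def, ← Real.exp_add, ← Real.exp_add]; norm_num; ring_nf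
    simp only [P, hfl, hf1_def]
    rw [hsq, k1, k2, hC_def, hE2_def]
    ring
  have e2 : Set.EqOn (fun y => P μ (x - y) * h y) f2 (Set.uIcc x 1) := by
    rw [Set.uIcc_of_le hx1.le]
    intro y hy
    obtain ⟨hyx, hy1⟩ := hy
    rcases eq_or_lt_of_le hyx with heq | hlt
    · subst heq
      have hfl : ⌊x - x⌋ = 0 := by norm_num
      have k1 : Real.exp (2*a*((x - x) - (0:ℤ))) = 1 := by norm_num
      have k2 : Real.exp (2*a*(1 - ((x - x) - (0:ℤ)))) = E2 := by
        rw [hE2_def]; norm_num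
      have k3 : Real.exp (2*a*x) * Real.exp (-(2*a)*x) = 1 := exp_mul_exp_neg a x
      simp only [P, hfl, hf2_def]
      rw [hsq, k1, k2, hC_def]
      rw [show Real.exp (-(2*a)*x) * Real.exp ((2*a)*x) = 1 by rw [mul_comm]; exact k3]
      rw [k3, ← hE2_def]
      ring
    · have hfl : ⌊x - y⌋ = -1 := by
        rw [show (-1 : ℤ) = ((-1 : ℤ)) from rfl, Int.floor_eq_iff]
        push_cast
        constructor <;> linarith
      have k1 : Real.exp (2*a*((x - y) - ((-1:ℤ)):ℝ)) =
          E2 * (Real.exp (2*a*x) * Real.exp (-(2*a)*y)) := by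
        rw [hE2_def, ← Real.exp_add, ← Real.exp_add]
        norm_num
        ring_nf
      have k2 : Real.exp (2*a*(1 - ((x - y) - ((-1:ℤ):ℝ)))) =
          Real.exp (-(2*a)*x) * Real.exp ((2*a)*y) := by
        rw [← Real.exp_add]
        norm_num
        ring_nf
      simp only [P, hfl, hf2_def]
      push_cast
      push_cast at k1 k2
      rw [hsq, k1, k2, hC_def, hE2_def]
      ring
  have i1 : IntervalIntegrable (fun y => P μ (x - y) * h y) volume 0 x :=
    intervalIntegrable_congr_of_eqOn e1 (hf1c.intervalIntegrable _ _)
  have i2 : IntervalIntegrable (fun y => P μ (x - y) * h y) volume x 1 :=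
    intervalIntegrable_congr_of_eqOn e2 (hf2c.intervalIntegrable _ _)
  have hgA : Continuous fun y => Real.exp (-(2*a)*y) * h y := by fun_prop
  have hgB : Continuous fun y => Real.exp ((2*a)*y) * h y := by fun_prop
  have j1 : (∫ y in (0:ℝ)..x, f1 y)
      = (C * Real.exp (2*a*x)) * AA μ h x + (C * E2 * Real.exp (-(2*a)*x)) * BB μ h x := by
    have : (∫ y in (0:ℝ)..x, f1 y)
        = ∫ y in (0:ℝ)..x, ((C * Real.exp (2*a*x)) * (Real.exp (-(2*a)*y) * h y)
            + (C * E2 * Real.exp (-(2*a)*x)) * (Real.exp ((2*a)*y) * h y)) := by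
      apply intervalIntegral.integral_congr
      intro y _
      rw [hf1_def]
      ring
    rw [this, intervalIntegral.integral_add ((hgA.intervalIntegrable _ _).const_mul _)
        ((hgB.intervalIntegrable _ _).const_mul _),
      intervalIntegral.integral_const_mul, intervalIntegral.integral_const_mul]
    rfl
  have j2 : (∫ y in x..(1:ℝ), f2 y)
      = (C * E2 * Real.exp (2*a*x)) * (AA μ h 1 - AA μ h x)
        + (C * Real.exp (-(2*a)*x)) * (BB μ h 1 - BB μ h x) := by
    have : (∫ y in x..(1:ℝ), f2 y)
        = ∫ y in x..(1:ℝ), ((C * E2 * Real.exp (2*a*x)) * (Real.exp (-(2*a)*y) * h y)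
            + (C * Real.exp (-(2*a)*x)) * (Real.exp ((2*a)*y) * h y)) := by
      apply intervalIntegral.integral_congr
      intro y _
      rw [hf2_def]
      ring
    rw [this, intervalIntegral.integral_add ((hgA.intervalIntegrable _ _).const_mul _)
        ((hgB.intervalIntegrable _ _).const_mul _),
      intervalIntegral.integral_const_mul, intervalIntegral.integral_const_mul]
    have sA : (∫ y in x..(1:ℝ), Real.exp (-(2*a)*y) * h y) = AA μ h 1 - AA μ h x := by
      rw [show AA μ h 1 - AA μ h x
          = (∫ y in (0:ℝ)..1, Real.exp (-(2*a)*y) * h y)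
            - ∫ y in (0:ℝ)..x, Real.exp (-(2*a)*y) * h y from rfl]
      rw [intervalIntegral.integral_interval_sub_left (hgA.intervalIntegrable _ _)
        (hgA.intervalIntegrable _ _)]
    have sB : (∫ y in x..(1:ℝ), Real.exp ((2*a)*y) * h y) = BB μ h 1 - BB μ h x := by
      rw [show BB μ h 1 - BB μ h x
          = (∫ y in (0:ℝ)..1, Real.exp ((2*a)*y) * h y)
            - ∫ y in (0:ℝ)..x, Real.exp ((2*a)*y) * h y from rfl]
      rw [intervalIntegral.integral_interval_sub_left (hgB.intervalIntegrable _ _)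
        (hgB.intervalIntegrable _ _)]
    rw [sA, sB]
  calc pconv μ h x
      = (∫ y in (0:ℝ)..x, P μ (x - y) * h y) + ∫ y in x..(1:ℝ), P μ (x - y) * h y :=
        (intervalIntegral.integral_add_adjacent_intervals i1 i2).symm
    _ = (∫ y in (0:ℝ)..x, f1 y) + ∫ y in x..(1:ℝ), f2 y := by
        rw [intervalIntegral.integral_congr e1, intervalIntegral.integral_congr e2]
    _ = Phi μ h x := by
        rw [j1, j2]
        unfold Phi
        rw [← ha_def, ← hE2_def, ← hC_def]
        ring

lemma pconv_shift (hper : Function.Periodic h 1) (c s : ℝ) :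
    pconv μ h s = pconv μ (fun y => h (y + c)) (s - c) := by
  have hFper : Function.Periodic (fun y => P μ (s - y) * h y) 1 := by
    intro y
    simp only []
    rw [show s - (y + 1) = s - y - 1 by ring, show P μ (s - y - 1) = P μ (s - y - 1 + 1) from
      (P_add_one μ (s - y - 1)).symm, show s - y - 1 + 1 = s - y by ring, hper y]
  have step1 : pconv μ (fun y => h (y + c)) (s - c)
      = ∫ y in (0:ℝ)..1, (fun z => P μ (s - z) * h z) (y + c) := by
    unfold pconv
    apply intervalIntegral.integral_congr
    intro y _
    simp only []
    rw [show s - c - y = s - (y + c) by ring]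
  rw [step1, intervalIntegral.integral_comp_add_right (fun z => P μ (s - z) * h z) c]
  unfold pconv
  rw [show (0:ℝ) + c = c by ring, show (1:ℝ) + c = c + 1 by ring]
  exact ((hFper.intervalIntegral_add_eq c 0).trans (by norm_num)).symm

lemma pconv_hasDerivAt_on_unit (hμ : 0 < μ) (hh : Continuous h) {s : ℝ} (hs : s ∈ Ioo (0:ℝ) 1) :
    HasDerivAt (pconv μ h) (Psi μ h s) s := by
  have hev : pconv μ h =ᶠ[nhds s] Phi μ h :=
    Filter.eventuallyEq_of_mem (isOpen_Ioo.mem_nhds hs) (fun r hr => pconv_eq_Phi hμ hh hr)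
  exact (hasDerivAt_Phi hh s).congr_of_eventuallyEq hev

/-- The Green's-function property: the derivative of `pconv μ h` has derivative
`(12/μ)(pconv μ h ξ - h ξ)` at every point. -/
lemma deriv_pconv_hasDerivAt (hμ : 0 < μ) (hh : Continuous h)
    (hper : Function.Periodic h 1) (ξ : ℝ) :
    HasDerivAt (deriv (pconv μ h)) (12/μ * (pconv μ h ξ - h ξ)) ξ := by
  set c := ξ - 1/2 with hc_def
  set hc : ℝ → ℝ := fun y => h (y + c) with hhc_def
  have hcc : Continuous hc := hh.comp (by fun_prop)
  have hshift : ∀ s, pconv μ h s = pconv μ hc (s - c) := fun s => pconv_shift hper c s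
  -- the derivative of pconv μ h near ξ
  have hball : ∀ s ∈ Ioo (ξ - 1/2) (ξ + 1/2), deriv (pconv μ h) s = Psi μ hc (s - c) := by
    intro s hs
    have h1 : s - c ∈ Ioo (0:ℝ) 1 := by
      constructor
      · simp only [hc_def]; linarith [hs.1]
      · simp only [hc_def]; linarith [hs.2]
    have h2 : HasDerivAt (fun r => pconv μ hc (r - c)) (Psi μ hc (s - c) * 1) s :=
      by have := (pconv_hasDerivAt_on_unit hμ hcc h1).comp s ((hasDerivAt_id s).sub_const c); exact this
    rw [mul_one] at h2
    have h3 : (fun r => pconv μ hc (r - c)) = pconv μ h := (funext hshift).symm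
    rw [h3] at h2
    exact h2.deriv
  have hξc : ξ - c = 1/2 := by rw [hc_def]; ring
  have hPsiD : HasDerivAt (fun s => Psi μ hc (s - c))
      (12/μ * (Phi μ hc (1/2) - hc (1/2)) * 1) ξ := by
    have := (hasDerivAt_Psi hμ hcc (ξ - c)).comp ξ ((hasDerivAt_id ξ).sub_const c)
    rwa [hξc] at this
  rw [mul_one] at hPsiD
  have hval1 : Phi μ hc (1/2) = pconv μ h ξ := by
    rw [← pconv_eq_Phi hμ hcc (by norm_num : (1:ℝ)/2 ∈ Ioo (0:ℝ) 1), ← hξc, ← hshift]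
  have hval2 : hc (1/2) = h ξ := by
    rw [hhc_def]
    simp only []
    rw [show 1/2 + c = ξ by rw [hc_def]; ring]
  rw [hval1, hval2] at hPsiD
  apply hPsiD.congr_of_eventuallyEq
  apply Filter.eventuallyEq_of_mem (isOpen_Ioo.mem_nhds (by constructor <;> linarith :
    ξ ∈ Ioo (ξ - 1/2) (ξ + 1/2)))
  intro s hs
  rw [hball s hs]

section Sol

variable {ε μ T : ℝ} (sol : QLSol ε μ T) {t : ℝ}

lemma ux_periodic (ht : t ∈ Set.Ico (0:ℝ) T) :
    Function.Periodic (fun x => sol.ux x t) 1 := by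
  intro x
  have h1 := sol.hux (x + 1) t ht
  have h2 := sol.hux x t ht
  have h3 : HasDerivAt (fun x' => sol.u (x' + 1) t) (sol.ux (x + 1) t * 1) x :=
    by have := h1.comp x ((hasDerivAt_id x).add_const 1); exact this
  rw [mul_one] at h3
  have h4 : (fun x' => sol.u (x' + 1) t) = (fun x' => sol.u x' t) :=
    funext fun x' => sol.periodic t ht x'
  rw [h4] at h3
  exact h3.unique h2

lemma ux_continuous (ht : t ∈ Set.Ico (0:ℝ) T) : Continuous (fun x => sol.ux x t) :=
  continuous_iff_continuousAt.mpr fun x => (sol.huxx x t ht).continuousAt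

lemma u_continuous (ht : t ∈ Set.Ico (0:ℝ) T) : Continuous (fun x => sol.u x t) :=
  continuous_iff_continuousAt.mpr fun x => (sol.hux x t ht).continuousAt

lemma gfun_continuous (ht : t ∈ Set.Ico (0:ℝ) T) :
    Continuous (gfun ε μ (fun x' => sol.u x' t) (fun x' => sol.ux x' t)) := by
  have h1 := u_continuous sol ht
  have h2 := ux_continuous sol ht
  unfold gfun
  fun_prop

lemma gfun_periodic (ht : t ∈ Set.Ico (0:ℝ) T) :
    Function.Periodic (gfun ε μ (fun x' => sol.u x' t) (fun x' => sol.ux x' t)) 1 := by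
  intro x
  unfold gfun
  rw [sol.periodic t ht x, ux_periodic sol ht x]

/-- The sup `S t` is attained at some point of `[0,1]` and dominates all values. -/
lemma exists_max (S : ℝ → ℝ) (hS : ∀ t, S t = sSup (Set.range fun x => sol.ux x t))
    (ht : t ∈ Set.Ico (0:ℝ) T) :
    ∃ ξ ∈ Set.Icc (0:ℝ) 1, (∀ x, sol.ux x t ≤ sol.ux ξ t) ∧ S t = sol.ux ξ t := by
  have hcont := ux_continuous sol ht
  obtain ⟨ξ, hξmem, hξmax⟩ := isCompact_Icc.exists_isMaxOn (s := Set.Icc (0:ℝ) 1)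
    ⟨0, by norm_num⟩ hcont.continuousOn
  have hper := ux_periodic sol ht
  have hglobal : ∀ x, sol.ux x t ≤ sol.ux ξ t := by
    intro x
    have h1 : sol.ux (x - (⌊x⌋ : ℝ)) t = sol.ux x t := by
      simpa only [mul_one] using hper.sub_int_mul_eq (n := ⌊x⌋)
    rw [← h1]
    exact hξmax (⟨by linarith [Int.floor_le x], by linarith [Int.lt_floor_add_one x]⟩ :
      x - (⌊x⌋ : ℝ) ∈ Set.Icc (0:ℝ) 1)
  refine ⟨ξ, hξmem, hglobal, ?_⟩
  rw [hS t]
  apply le_antisymm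
  · exact csSup_le (Set.range_nonempty _) (by rintro _ ⟨x, rfl⟩; exact hglobal x)
  · exact le_csSup ⟨sol.ux ξ t, by rintro _ ⟨x, rfl⟩; exact hglobal x⟩ (Set.mem_range_self ξ)

lemma le_S (S : ℝ → ℝ) (hS : ∀ t, S t = sSup (Set.range fun x => sol.ux x t))
    (ht : t ∈ Set.Ico (0:ℝ) T) (x : ℝ) : sol.ux x t ≤ S t := by
  obtain ⟨ξ, _, hmax, hval⟩ := exists_max sol S hS ht
  rw [hval]; exact hmax x

end Sol

section Sol2

variable {ε μ T : ℝ} (sol : QLSol ε μ T)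

lemma S_lipschitzOn (S : ℝ → ℝ) (hS : ∀ t, S t = sSup (Set.range fun x => sol.ux x t))
    {a b : ℝ} (h0 : 0 < a) (hab : a ≤ b) (hbT : b < T) :
    ∃ K : NNReal, LipschitzOnWith K S (Set.Icc a b) := by
  have hsub : Set.Icc a b ⊆ Set.Ico 0 T := fun r hr => ⟨le_trans h0.le hr.1, lt_of_le_of_lt hr.2 hbT⟩
  -- bound |utx| on [0,1] × [a,b]
  have hKc : IsCompact ((Set.Icc (0:ℝ) 1) ×ˢ (Set.Icc a b)) := isCompact_Icc.prod isCompact_Icc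
  have hKsub : (Set.Icc (0:ℝ) 1) ×ˢ (Set.Icc a b) ⊆ Set.univ ×ˢ Set.Ico (0:ℝ) T :=
    fun p hp => ⟨trivial, hsub hp.2⟩
  obtain ⟨L, hL⟩ := hKc.exists_bound_of_continuousOn (sol.contutx.mono hKsub)
  set L' := max L 0 with hL'_def
  have hL'0 : 0 ≤ L' := le_max_right _ _
  have hbound : ∀ ξ ∈ Set.Icc (0:ℝ) 1, ∀ r ∈ Set.Icc a b, ‖sol.utx ξ r‖ ≤ L' := by
    intro ξ hξ r hr
    exact le_trans (hL (ξ, r) ⟨hξ, hr⟩) (le_max_left _ _)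
  -- |ux ξ t - ux ξ s| ≤ L' |t - s| for ξ ∈ [0,1], s,t ∈ [a,b]
  have hux_lip : ∀ ξ ∈ Set.Icc (0:ℝ) 1, ∀ s ∈ Set.Icc a b, ∀ t ∈ Set.Icc a b,
      |sol.ux ξ t - sol.ux ξ s| ≤ L' * |t - s| := by
    intro ξ hξ s hs t ht
    rcases le_total s t with hst | hts
    · have key := norm_image_sub_le_of_norm_deriv_le_segment'
        (f := fun r => sol.ux ξ r) (f' := fun r => sol.utx ξ r) (a := s) (b := t) (C := L')
        (fun r hr => (sol.hutx ξ r (hsub ⟨le_trans hs.1 hr.1, le_trans hr.2 ht.2⟩)).mono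
          (fun z hz => hsub ⟨le_trans hs.1 hz.1, le_trans hz.2 ht.2⟩))
        (fun r hr => hbound ξ hξ r ⟨le_trans hs.1 hr.1, le_trans hr.2.le ht.2⟩)
        t (Set.right_mem_Icc.mpr hst)
      rw [abs_of_nonneg (by linarith : (0:ℝ) ≤ t - s)]
      simpa using key
    · have key := norm_image_sub_le_of_norm_deriv_le_segment'
        (f := fun r => sol.ux ξ r) (f' := fun r => sol.utx ξ r) (a := t) (b := s) (C := L')
        (fun r hr => (sol.hutx ξ r (hsub ⟨le_trans ht.1 hr.1, le_trans hr.2 hs.2⟩)).mono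
          (fun z hz => hsub ⟨le_trans ht.1 hz.1, le_trans hz.2 hs.2⟩))
        (fun r hr => hbound ξ hξ r ⟨le_trans ht.1 hr.1, le_trans hr.2.le hs.2⟩)
        s (Set.right_mem_Icc.mpr hts)
      rw [abs_sub_comm, abs_sub_comm t s, abs_of_nonneg (by linarith : (0:ℝ) ≤ s - t)]
      simpa using key
    -- note: second case handled
  have hkey : ∀ s ∈ Set.Icc a b, ∀ t ∈ Set.Icc a b, S t - S s ≤ L' * |t - s| := by
    intro s hs t ht
    obtain ⟨ξ, hξmem, hξmax, hξval⟩ := exists_max sol S hS (hsub ht)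
    have h1 : sol.ux ξ s ≤ S s := le_S sol S hS (hsub hs) ξ
    have h2 := hux_lip ξ hξmem s hs t ht
    have h3 : sol.ux ξ t - sol.ux ξ s ≤ L' * |t - s| := le_trans (le_abs_self _) h2
    linarith [hξval]
  refine ⟨⟨L', hL'0⟩, ?_⟩
  refine lipschitzOnWith_iff_dist_le_mul.mpr ?_
  intro s hs r hr
  rw [Real.dist_eq, Real.dist_eq]
  change |S s - S r| ≤ L' * |s - r|
  have h1 := hkey r hr s hs
  have h2 := hkey s hs r hr
  rw [abs_sub_comm r s] at h2
  rw [abs_sub_le_iff]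
  constructor
  · simpa using h1
  · simpa using h2

end Sol2

section Sol3

open MeasureTheory

variable {ε μ T : ℝ} (sol : QLSol ε μ T)

lemma S_ae_differentiable (hT : 0 < T) (S : ℝ → ℝ)
    (hS : ∀ t, S t = sSup (Set.range fun x => sol.ux x t)) :
    ∀ᵐ t ∂volume, t ∈ Set.Ioo (0:ℝ) T → DifferentiableAt ℝ S t := by
  have key : ∀ n : ℕ, volume {t | t ∈ Set.Ioo (T/(n+2)) (T - T/(n+2)) ∧
      ¬DifferentiableAt ℝ S t} = 0 := by
    intro n
    set δ : ℝ := T/(n+2) with hδ_def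
    have hδ0 : 0 < δ := by positivity
    by_cases hn : δ < T - δ
    · obtain ⟨K, hK⟩ := S_lipschitzOn sol S hS hδ0 hn.le (by linarith)
      obtain ⟨g, hgl, hgeq⟩ := hK.extend_real
      have hga := hgl.ae_differentiableAt (μ := volume)
      rw [ae_iff] at hga
      refine measure_mono_null ?_ hga
      rintro t ⟨ht, hnd⟩
      simp only [Set.mem_setOf_eq]
      intro hdg
      apply hnd
      have hev : S =ᶠ[nhds t] g :=
        Filter.eventuallyEq_of_mem (isOpen_Ioo.mem_nhds ht)
          (fun r hr => hgeq ⟨hr.1.le, hr.2.le⟩)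
      exact hev.differentiableAt_iff.mpr hdg
    · have : Set.Ioo δ (T - δ) = ∅ := Set.Ioo_eq_empty hn
      refine measure_mono_null (fun t ht => ?_) measure_empty
      rw [← this]
      exact ht.1
  rw [ae_iff]
  have hset : {t | ¬(t ∈ Set.Ioo (0:ℝ) T → DifferentiableAt ℝ S t)}
      = {t | t ∈ Set.Ioo (0:ℝ) T ∧ ¬DifferentiableAt ℝ S t} := by
    ext t; simp only [Set.mem_setOf_eq]; tauto
  rw [hset]
  refine measure_mono_null ?_ (measure_iUnion_null fun n : ℕ => key n)
  rintro t ⟨⟨ht0, htT⟩, hnd⟩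
  have hm : 0 < min t (T - t) := lt_min ht0 (by linarith)
  obtain ⟨n, hn⟩ := exists_nat_gt (T / min t (T - t))
  have hn2 : T/(n+2) < min t (T - t) := by
    rw [div_lt_iff₀ (by positivity)]
    rw [div_lt_iff₀ hm] at hn
    nlinarith [hm.le]
  refine Set.mem_iUnion.mpr ⟨n, ⟨⟨?_, ?_⟩, hnd⟩⟩
  · exact lt_of_lt_of_le hn2 (min_le_left _ _)
  · have := lt_of_lt_of_le hn2 (min_le_right _ _)
    linarith

end Sol3

section Sol4

open Filter

variable {ε μ T : ℝ} (sol : QLSol ε μ T) {t : ℝ}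

lemma clairaut (ht : t ∈ Set.Ioo (0:ℝ) T) (x : ℝ) :
    HasDerivAt (fun x' => sol.ut x' t) (sol.utx x t) x := by
  obtain ⟨ht0, htT⟩ := ht
  have ht' : t ∈ Set.Ico (0:ℝ) T := ⟨ht0.le, htT⟩
  have hIco_nhds : Set.Ico (0:ℝ) T ∈ nhds t :=
    mem_nhds_iff.mpr ⟨Set.Ioo 0 T, Set.Ioo_subset_Ico_self, isOpen_Ioo, ⟨ht0, htT⟩⟩
  set r : ℝ := min t (T - t) / 2 with hr_def
  have hmin : 0 < min t (T - t) := lt_min ht0 (by linarith)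
  have hr0 : 0 < r := by positivity
  have hrt : r ≤ t/2 := by
    rw [hr_def]; have := min_le_left t (T - t); linarith
  have hrT : r ≤ (T - t)/2 := by
    rw [hr_def]; have := min_le_right t (T - t); linarith
  have hmem : ∀ τ : ℝ, |τ - t| ≤ r → τ ∈ Set.Ico (0:ℝ) T := by
    intro τ hτ
    rw [abs_le] at hτ
    constructor
    · linarith [hτ.1]
    · linarith [hτ.2]
  have hmemIoo : ∀ τ : ℝ, |τ - t| ≤ r → τ ∈ Set.Ioo (0:ℝ) T := by
    intro τ hτ
    rw [abs_le] at hτ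
    constructor
    · linarith [hτ.1]
    · linarith [hτ.2]
  have hnhds : ∀ τ : ℝ, |τ - t| ≤ r → Set.Ico (0:ℝ) T ∈ nhds τ := fun τ hτ =>
    mem_nhds_iff.mpr ⟨Set.Ioo 0 T, Set.Ioo_subset_Ico_self, isOpen_Ioo, hmemIoo τ hτ⟩
  apply hasDerivAt_of_tendstoUniformlyOn
    (f := fun (k:ℝ) x' => (sol.u x' (t+k) - sol.u x' t)/k)
    (f' := fun (k:ℝ) x' => (sol.ux x' (t+k) - sol.ux x' t)/k)
    (g := fun x' => sol.ut x' t) (g' := fun x' => sol.utx x' t)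
    (l := nhdsWithin (0:ℝ) {0}ᶜ) (s := Set.Ioo (x-1) (x+1)) isOpen_Ioo
  -- uniform convergence of the difference quotients of ux
  · rw [Metric.tendstoUniformlyOn_iff]
    intro e he
    set K : Set (ℝ×ℝ) := Set.Icc (x-1) (x+1) ×ˢ Set.Icc (t - r) (t + r) with hK_def
    have hKc : IsCompact K := isCompact_Icc.prod isCompact_Icc
    have hKsub : K ⊆ Set.univ ×ˢ Set.Ico 0 T := by
      rintro ⟨p1, p2⟩ hp
      exact ⟨trivial, hmem p2 (abs_le.mpr ⟨by linarith [hp.2.1], by linarith [hp.2.2]⟩)⟩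
    have hucont := hKc.uniformContinuousOn_of_continuous (sol.contutx.mono hKsub)
    rw [Metric.uniformContinuousOn_iff] at hucont
    obtain ⟨δ, hδ0, hδ⟩ := hucont e he
    have hev1 : ∀ᶠ k in nhds (0:ℝ), |k| < min δ r := by
      have : Metric.ball (0:ℝ) (min δ r) ∈ nhds (0:ℝ) :=
        Metric.ball_mem_nhds 0 (lt_min hδ0 hr0)
      filter_upwards [this] with k hk
      simpa [Real.dist_eq] using hk
    filter_upwards [eventually_nhdsWithin_of_eventually_nhds hev1, self_mem_nhdsWithin]
      with k hk hk0
    intro x' hx'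
    have hk0' : k ≠ 0 := hk0
    have hkr : |k| ≤ r := le_of_lt (lt_of_lt_of_le hk (min_le_right _ _))
    -- MVT: the difference quotient equals utx x' c for some |c - t| ≤ |k|
    obtain ⟨c, hcnear, hc_eq⟩ : ∃ c, |c - t| ≤ |k| ∧
        (sol.ux x' (t+k) - sol.ux x' t)/k = sol.utx x' c := by
      have hcont2 : ∀ (a b : ℝ), t - r ≤ a → b ≤ t + r →
          ContinuousOn (fun τ => sol.ux x' τ) (Set.Icc a b) := by
        intro a b haa hbb
        apply (sol.contux.comp (Continuous.continuousOn (by fun_prop) :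
          ContinuousOn (fun τ:ℝ => ((x':ℝ), τ)) (Set.Icc a b)))
        intro τ hτ
        exact ⟨trivial, hmem τ (abs_le.mpr ⟨by linarith [hτ.1], by linarith [hτ.2]⟩)⟩
      rcases hk0'.lt_or_gt with hneg | hpos
      · have hlt : t + k < t := by linarith
        obtain ⟨c, hc, heq⟩ := exists_hasDerivAt_eq_slope (fun τ => sol.ux x' τ)
          (fun τ => sol.utx x' τ) hlt
          (hcont2 (t+k) t (by rw [abs_of_neg hneg] at hkr; linarith) (by linarith))
          (fun τ hτ => (sol.hutx x' τ (hmem τ (by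
              rw [abs_le, abs_of_neg hneg] at *
              constructor <;> [linarith [hτ.1]; linarith [hτ.2]]))).hasDerivAt
            (hnhds τ (by rw [abs_le, abs_of_neg hneg] at *
                         constructor <;> [linarith [hτ.1]; linarith [hτ.2]])))
        refine ⟨c, ?_, ?_⟩
        · rw [abs_of_neg hneg] at *
          rw [abs_le]
          constructor <;> [linarith [hc.1]; linarith [hc.2]]
        · rw [heq, show t - (t + k) = -k by ring]
          ring
      · have hlt : t < t + k := by linarith
        obtain ⟨c, hc, heq⟩ := exists_hasDerivAt_eq_slope (fun τ => sol.ux x' τ)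
          (fun τ => sol.utx x' τ) hlt
          (hcont2 t (t+k) (by linarith) (by rw [abs_of_pos hpos] at hkr; linarith))
          (fun τ hτ => (sol.hutx x' τ (hmem τ (by
              rw [abs_le, abs_of_pos hpos] at *
              constructor <;> [linarith [hτ.1]; linarith [hτ.2]]))).hasDerivAt
            (hnhds τ (by rw [abs_le, abs_of_pos hpos] at *
                         constructor <;> [linarith [hτ.1]; linarith [hτ.2]])))
        refine ⟨c, ?_, ?_⟩
        · rw [abs_of_pos hpos] at *
          rw [abs_le]
          constructor <;> [linarith [hc.1]; linarith [hc.2]]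
        · rw [heq, show t + k - t = k by ring]
    rw [hc_eq]
    have hmem1 : ((x':ℝ), t) ∈ K := by
      refine ⟨⟨hx'.1.le, hx'.2.le⟩, ?_⟩
      constructor <;> [linarith [hr0]; linarith [hr0]]
    have hmem2 : ((x':ℝ), c) ∈ K := by
      have : |c - t| ≤ r := le_trans hcnear hkr
      rw [abs_le] at this
      exact ⟨⟨hx'.1.le, hx'.2.le⟩, ⟨by linarith [this.1], by linarith [this.2]⟩⟩
    have := hδ ((x':ℝ), t) hmem1 ((x':ℝ), c) hmem2 (by
      rw [Prod.dist_eq]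
      simp only [dist_self]
      rw [Real.dist_eq]
      have h1 : |t - c| ≤ |k| := by rw [abs_sub_comm]; exact hcnear
      have h2 : |k| < δ := lt_of_lt_of_le hk (min_le_left _ _)
      rw [sup_lt_iff]
      exact ⟨hδ0, by linarith⟩)
    exact this
  -- the difference quotients have the expected x-derivatives
  · have hev1 : ∀ᶠ k in nhds (0:ℝ), |k| < r := by
      have : Metric.ball (0:ℝ) r ∈ nhds (0:ℝ) := Metric.ball_mem_nhds 0 hr0
      filter_upwards [this] with k hk
      simpa [Real.dist_eq] using hk
    filter_upwards [eventually_nhdsWithin_of_eventually_nhds hev1] with k hk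
    intro x' _
    have h1 := sol.hux x' (t+k) (hmem (t+k) (by simpa using hk.le))
    have h2 := sol.hux x' t ht'
    exact (h1.sub h2).div_const k
  -- pointwise convergence to ut
  · intro x' _
    have hd : HasDerivAt (fun τ => sol.u x' τ) (sol.ut x' t) t :=
      (sol.hut x' t ht').hasDerivAt hIco_nhds
    rw [hasDerivAt_iff_tendsto_slope] at hd
    have hmap : Tendsto (fun k : ℝ => t + k) (nhdsWithin (0:ℝ) {0}ᶜ)
        (nhdsWithin t {t}ᶜ) := by
      rw [tendsto_nhdsWithin_iff]
      constructor
      · have : Tendsto (fun k : ℝ => t + k) (nhds 0) (nhds (t + 0)) :=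
          (continuous_const.add continuous_id).tendsto 0
        rw [add_zero] at this
        exact this.mono_left nhdsWithin_le_nhds
      · filter_upwards [self_mem_nhdsWithin] with k hk
        simp only [Set.mem_compl_iff, Set.mem_singleton_iff] at hk ⊢
        intro hcon
        apply hk
        linarith
    have := hd.comp hmap
    apply this.congr
    intro k
    simp only [Function.comp_apply, slope_def_field]
    rw [show t + k - t = k by ring]
  -- x is in the open set
  · constructor <;> linarith

end Sol4


/-- Evolution of the maximal slope: for a.e. `t ∈ (0,T)`, `S(t) = sup_x u_x(x,t)` is
differentiable at `t` and at any maximizer `ξ(t)` of `u_x(·,t)` one has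
`S'(t) - (7/2)ε S(t)² = -(12/μ)(P∗g(u))(ξ(t)) + (12/μ)g(u)(ξ(t))`. -/
theorem stmt10 (ε μ T : ℝ) (hε : 0 < ε) (hμ : 0 < μ) (hT : 0 < T)
    (sol : QLSol ε μ T) (S : ℝ → ℝ)
    (hS : ∀ t, S t = sSup (Set.range fun x => sol.ux x t)) :
    ∀ᵐ t ∂MeasureTheory.volume, t ∈ Set.Ioo (0:ℝ) T →
      DifferentiableAt ℝ S t ∧
      ∀ ξ : ℝ, sol.ux ξ t = S t →
        deriv S t - (7/2) * ε * (S t)^2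
          = -(12/μ) * pconv μ (gfun ε μ (fun x' => sol.u x' t) (fun x' => sol.ux x' t)) ξ
            + (12/μ) * gfun ε μ (fun x' => sol.u x' t) (fun x' => sol.ux x' t) ξ := by
  filter_upwards [S_ae_differentiable sol hT S hS] with t hdiffimp htIoo
  have hd := hdiffimp htIoo
  refine ⟨hd, ?_⟩
  intro ξ hξ
  obtain ⟨ht0, htT⟩ := htIoo
  have ht' : t ∈ Set.Ico (0:ℝ) T := ⟨ht0.le, htT⟩
  have hIco_nhds : Set.Ico (0:ℝ) T ∈ nhds t :=
    mem_nhds_iff.mpr ⟨Set.Ioo 0 T, Set.Ioo_subset_Ico_self, isOpen_Ioo, ⟨ht0, htT⟩⟩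
  -- Danskin: deriv S t = utx ξ t
  have hux_t : HasDerivAt (fun s => sol.ux ξ s) (sol.utx ξ t) t :=
    (sol.hutx ξ t ht').hasDerivAt hIco_nhds
  have hmin : IsLocalMin (fun s => S s - sol.ux ξ s) t := by
    filter_upwards [hIco_nhds] with s hs
    have h1 := le_S sol S hS hs ξ
    show S t - sol.ux ξ t ≤ S s - sol.ux ξ s
    rw [hξ]
    linarith
  have hz := hmin.deriv_eq_zero
  have hds : deriv (fun s => S s - sol.ux ξ s) t = deriv S t - sol.utx ξ t := by
    rw [deriv_fun_sub hd hux_t.differentiableAt, hux_t.deriv]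
  have hDanskin : deriv S t = sol.utx ξ t := by rw [hds] at hz; linarith
  -- uxx ξ t = 0 at the maximizer
  have hmax2 : IsLocalMax (fun x => sol.ux x t) ξ :=
    Filter.Eventually.of_forall fun x => by
      show sol.ux x t ≤ sol.ux ξ t
      rw [hξ]
      exact le_S sol S hS ht' x
  have huxx0 : sol.uxx ξ t = 0 := by
    have h := hmax2.deriv_eq_zero
    rwa [(sol.huxx ξ t ht').deriv] at h
  -- the nonlinearity
  set g := gfun ε μ (fun x' => sol.u x' t) (fun x' => sol.ux x' t) with hg_def
  have hgc : Continuous g := gfun_continuous sol ht'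
  have hgp : Function.Periodic g 1 := gfun_periodic sol ht'
  have hP2 : HasDerivAt (deriv (pconv μ g)) (12/μ * (pconv μ g ξ - g ξ)) ξ :=
    deriv_pconv_hasDerivAt hμ hgc hgp ξ
  -- rewrite ut via the equation and differentiate in x at ξ
  have hfun : (fun x' => sol.ut x' t)
      = fun x' => sol.ux x' t + 7/2*ε*(sol.u x' t * sol.ux x' t) - deriv (pconv μ g) x' := by
    funext x'
    have he := sol.eqn x' t ht'
    rw [← hg_def] at he
    linear_combination he
  have hRHS : HasDerivAt
      (fun x' => sol.ux x' t + 7/2*ε*(sol.u x' t * sol.ux x' t) - deriv (pconv μ g) x')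
      (sol.uxx ξ t + 7/2*ε*(sol.ux ξ t * sol.ux ξ t + sol.u ξ t * sol.uxx ξ t)
        - 12/μ * (pconv μ g ξ - g ξ)) ξ :=
    ((sol.huxx ξ t ht').add
      (((sol.hux ξ t ht').mul (sol.huxx ξ t ht')).const_mul (7/2*ε))).sub hP2
  have hL : HasDerivAt (fun x' => sol.ut x' t) (sol.utx ξ t) ξ := clairaut sol ⟨ht0, htT⟩ ξ
  rw [hfun] at hL
  have huniq := hL.unique hRHS
  rw [hDanskin, huniq, huxx0, hξ]
  ring
end

section
/- Let ε > 0, 0 < μ ≤ 12 and let u : ℝ → ℝ be continuously differentiable and 1-periodic with ∫₀¹ (u² + (μ/12)·(u')²) dx = C₀. Then sup_{x∈[0,1]} |(P∗g(u))(x)| ≤ 2·n₂·C₀^{1/2} + (5/2)·ε·n_∞·C₀ + (1/8)·ε²·n_∞·√(13/μ)·C₀^{3/2} + (3/64)·ε³·n_∞·(13/μ)·C₀² + (7/4)·ε·n_∞·C₀, where n₂ = ‖P‖_{L²[0,1]} and n_∞ = ‖P‖_{L^∞[0,1]}. -/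
open MeasureTheory intervalIntegral

noncomputable def n2 (μ : ℝ) : ℝ := Real.sqrt (∫ x in (0:ℝ)..1, (P μ x)^2)

noncomputable def ninf (μ : ℝ) : ℝ := sSup ((fun x => |P μ x|) '' Set.Icc (0:ℝ) 1)

lemma P_periodic (μ : ℝ) : Function.Periodic (P μ) 1 := by
  intro x
  unfold P
  rw [Int.floor_add_one]
  push_cast
  ring_nf

lemma s_pos {μ : ℝ} (hμ : 0 < μ) : 0 < Real.sqrt (3/μ) :=
  Real.sqrt_pos.2 (by positivity)

lemma denom_pos {μ : ℝ} (hμ : 0 < μ) : 0 < Real.exp (2 * Real.sqrt (3/μ)) - 1 := by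
  have hs := s_pos hμ
  have : (1:ℝ) < Real.exp (2 * Real.sqrt (3/μ)) := by
    rw [Real.one_lt_exp_iff]; positivity
  linarith

lemma P_pos {μ : ℝ} (hμ : 0 < μ) (x : ℝ) : 0 < P μ x := by
  have hs := s_pos hμ
  have hd := denom_pos hμ
  unfold P
  positivity

lemma P_le {μ : ℝ} (hμ : 0 < μ) (x : ℝ) :
    P μ x ≤ Real.sqrt (3/μ) * (2 * Real.exp (2 * Real.sqrt (3/μ))) /
      (Real.exp (2 * Real.sqrt (3/μ)) - 1) := by
  have hs := s_pos hμ
  have hd := denom_pos hμ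
  unfold P
  have hfr : x - ⌊x⌋ ∈ Set.Ico (0:ℝ) 1 :=
    ⟨by linarith [Int.floor_le x], by linarith [Int.lt_floor_add_one x]⟩
  have h1 : Real.exp (2 * Real.sqrt (3/μ) * (x - ⌊x⌋)) ≤ Real.exp (2 * Real.sqrt (3/μ)) := by
    apply Real.exp_le_exp.2; nlinarith [hfr.1, hfr.2]
  have h2 : Real.exp (2 * Real.sqrt (3/μ) * (1 - (x - ⌊x⌋))) ≤ Real.exp (2 * Real.sqrt (3/μ)) := by
    apply Real.exp_le_exp.2; nlinarith [hfr.1, hfr.2]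
  rw [div_le_div_iff_of_pos_right hd]
  nlinarith

lemma bddAbove_P (μ : ℝ) (hμ : 0 < μ) :
    BddAbove ((fun x => |P μ x|) '' Set.Icc (0:ℝ) 1) := by
  refine ⟨Real.sqrt (3/μ) * (2 * Real.exp (2 * Real.sqrt (3/μ))) /
      (Real.exp (2 * Real.sqrt (3/μ)) - 1), ?_⟩
  rintro z ⟨t, _, rfl⟩
  simp only
  rw [abs_of_pos (P_pos hμ t)]
  exact P_le hμ t

lemma abs_P_le_ninf {μ : ℝ} (hμ : 0 < μ) (z : ℝ) : |P μ z| ≤ ninf μ := by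
  have hper : ∀ t : ℝ, P μ (Int.fract t) = P μ t := by
    intro t
    have := (P_periodic μ).sub_int_mul_eq (x := t) (n := ⌊t⌋)
    rw [Int.fract]
    simpa using this
  rw [← hper z]
  apply le_csSup (bddAbove_P μ hμ)
  exact ⟨Int.fract z, ⟨Int.fract_nonneg z, (Int.fract_lt_one z).le⟩, rfl⟩

lemma ninf_nonneg {μ : ℝ} (hμ : 0 < μ) : 0 ≤ ninf μ :=
  le_trans (abs_nonneg _) (abs_P_le_ninf hμ 0)

lemma measurable_int_cast_floor : Measurable (fun x : ℝ => ((⌊x⌋ : ℤ) : ℝ)) :=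
  measurable_from_top.comp Int.measurable_floor

lemma measurable_P (μ : ℝ) : Measurable (P μ) := by
  have hfl : Measurable (fun x : ℝ => ((⌊x⌋ : ℤ) : ℝ)) :=
    measurable_int_cast_floor
  have hfr : Measurable (fun x : ℝ => x - ((⌊x⌋ : ℤ) : ℝ)) := measurable_id.sub hfl
  unfold P
  apply Measurable.div _ measurable_const
  apply Measurable.const_mul
  exact (Real.measurable_exp.comp (hfr.const_mul _)).add
    (Real.measurable_exp.comp ((measurable_const.sub hfr).const_mul _))

lemma cs_int (f g : ℝ → ℝ)
    (hf2 : IntervalIntegrable (fun y => (f y)^2) volume 0 1)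
    (hg2 : IntervalIntegrable (fun y => (g y)^2) volume 0 1)
    (hfg : IntervalIntegrable (fun y => f y * g y) volume 0 1) :
    |∫ y in (0:ℝ)..1, f y * g y|
      ≤ Real.sqrt (∫ y in (0:ℝ)..1, (f y)^2) * Real.sqrt (∫ y in (0:ℝ)..1, (g y)^2) := by
  set A := ∫ y in (0:ℝ)..1, (f y)^2 with hA'
  set B := ∫ y in (0:ℝ)..1, f y * g y with hB'
  set C := ∫ y in (0:ℝ)..1, (g y)^2 with hC'
  have hA : 0 ≤ A := intervalIntegral.integral_nonneg (by norm_num) (fun y _ => sq_nonneg _)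
  have hCc : 0 ≤ C := intervalIntegral.integral_nonneg (by norm_num) (fun y _ => sq_nonneg _)
  have key : ∀ r : ℝ, 0 ≤ A*(r*r) + (2*B)*r + C := by
    intro r
    have h0 : 0 ≤ ∫ y in (0:ℝ)..1, (r * f y + g y)^2 :=
      intervalIntegral.integral_nonneg (by norm_num) (fun y _ => sq_nonneg _)
    have hexp : (∫ y in (0:ℝ)..1, (r * f y + g y)^2) = A*(r*r) + (2*B)*r + C := by
      have e : (fun y => (r * f y + g y)^2)
          = fun y => (r*r) * (f y)^2 + (2*r) * (f y * g y) + (g y)^2 := funext fun y => by ring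
      rw [e, intervalIntegral.integral_add ((hf2.const_mul _).add (hfg.const_mul _)) hg2,
          intervalIntegral.integral_add (hf2.const_mul _) (hfg.const_mul _),
          intervalIntegral.integral_const_mul, intervalIntegral.integral_const_mul]
      ring
    linarith [hexp ▸ h0]
  have hd : discrim A (2*B) C ≤ 0 := discrim_le_zero (by intro r; linarith [key r])
  rw [discrim] at hd
  have hB2 : B^2 ≤ A*C := by nlinarith [hd]
  calc |B| = Real.sqrt (B^2) := (Real.sqrt_sq_eq_abs B).symm
    _ ≤ Real.sqrt (A*C) := Real.sqrt_le_sqrt hB2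
    _ = Real.sqrt A * Real.sqrt C := Real.sqrt_mul hA C

lemma bdd_meas_intable (f : ℝ → ℝ) (M : ℝ) (hm : Measurable f)
    (hbd : ∀ y ∈ Set.uIoc (0:ℝ) 1, |f y| ≤ M) :
    IntervalIntegrable f volume 0 1 := by
  rw [intervalIntegrable_iff]
  apply Integrable.mono' (g := fun _ => M)
  · exact integrableOn_const (by simp) (by simp)
  · exact hm.aestronglyMeasurable.restrict
  · exact (ae_restrict_iff' measurableSet_uIoc).2 (Filter.Eventually.of_forall
      (fun y hy => by simpa using hbd y hy))

set_option maxHeartbeats 1000000 in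

lemma sobolev (μ C₀ : ℝ) (hμ : 0 < μ) (hμ' : μ ≤ 12)
    (u : ℝ → ℝ) (hu : ContDiff ℝ 1 u) (hp : Function.Periodic u 1)
    (hC : (∫ x in (0:ℝ)..1, ((u x)^2 + (μ/12) * (deriv u x)^2)) = C₀) (x₀ : ℝ) :
    (u x₀)^2 ≤ 13/μ * C₀ := by
  set s := Real.sqrt (3/μ) with hsdef
  have hs : 0 < s := Real.sqrt_pos.2 (by positivity)
  have hs2 : s^2 = 3/μ := Real.sq_sqrt (by positivity)
  have hshalf : (1/2:ℝ) ≤ s := by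
    rw [hsdef]
    rw [show (1/2:ℝ) = Real.sqrt (1/4) by
      rw [show (1/4:ℝ) = (1/2)^2 by norm_num, Real.sqrt_sq (by norm_num)]]
    apply Real.sqrt_le_sqrt
    rw [div_le_div_iff₀ (by norm_num) hμ]; linarith
  have hcu : Continuous u := hu.continuous
  have hcu' : Continuous (deriv u) := hu.continuous_deriv le_rfl
  -- derivative of shifted u
  have hvd : ∀ y : ℝ, HasDerivAt (fun z => u (x₀ + z)) (deriv u (x₀ + y)) y := by
    intro y
    have h1 : HasDerivAt (fun z : ℝ => x₀ + z) 1 y := (hasDerivAt_id y).const_add x₀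
    have h2 := ((hu.differentiable one_ne_zero) (x₀ + y)).hasDerivAt
    exact (h2.comp y h1).congr_deriv (mul_one _)
  have hθ : ∀ y : ℝ, HasDerivAt (fun z : ℝ => s*(2*z-1)) (2*s) y := by
    intro y
    have := (((hasDerivAt_id y).const_mul 2).sub_const 1).const_mul s
    refine this.congr_deriv (by ring)
  have hh : ∀ y : ℝ, HasDerivAt
      (fun z => Real.sinh (s*(2*z-1)) / (2*s*Real.cosh (s*(2*z-1))))
      (1/(Real.cosh (s*(2*y-1)))^2) y := by
    intro y
    have hcpos : 0 < Real.cosh (s*(2*y-1)) := Real.cosh_pos _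
    have h1 : HasDerivAt (fun z => Real.sinh (s*(2*z-1)))
        (Real.cosh (s*(2*y-1)) * (2*s)) y := (Real.hasDerivAt_sinh _).comp y (hθ y)
    have h2 : HasDerivAt (fun z => 2*s*Real.cosh (s*(2*z-1)))
        (2*s*(Real.sinh (s*(2*y-1)) * (2*s))) y :=
      ((Real.hasDerivAt_cosh _).comp y (hθ y)).const_mul (2*s)
    have h3 := h1.div h2 (by positivity)
    refine h3.congr_deriv ?_
    have hid := Real.cosh_sq_sub_sinh_sq (s*(2*y-1))
    field_simp
    nlinarith [hid, sq_nonneg s]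
  have hF : ∀ y : ℝ, HasDerivAt
      (fun z => (u (x₀+z))^2 * (Real.sinh (s*(2*z-1)) / (2*s*Real.cosh (s*(2*z-1)))))
      (2*u (x₀+y)*deriv u (x₀+y) * (Real.sinh (s*(2*y-1)) / (2*s*Real.cosh (s*(2*y-1))))
        + (u (x₀+y))^2 * (1/(Real.cosh (s*(2*y-1)))^2)) y := by
    intro y
    have := ((hvd y).pow 2).mul (hh y)
    refine this.congr_deriv ?_
    simp only [Pi.pow_apply]
    ring
  -- continuity of the derivative integrand
  have hlin : Continuous fun y : ℝ => s*(2*y-1) :=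
    continuous_const.mul ((continuous_const.mul continuous_id).sub continuous_const)
  have hccosh : Continuous fun y : ℝ => Real.cosh (s*(2*y-1)) := Real.continuous_cosh.comp hlin
  have hcsinh : Continuous fun y : ℝ => Real.sinh (s*(2*y-1)) := Real.continuous_sinh.comp hlin
  have hH : Continuous fun y : ℝ => Real.sinh (s*(2*y-1)) / (2*s*Real.cosh (s*(2*y-1))) := by
    apply Continuous.div hcsinh (continuous_const.mul hccosh)
    intro y
    have := Real.cosh_pos (s*(2*y-1)); simp only [Pi.mul_apply]; positivity
  have hIc : Continuous fun y : ℝ => (1:ℝ)/(Real.cosh (s*(2*y-1)))^2 := by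
    apply Continuous.div continuous_const (hccosh.pow 2)
    intro y
    have := Real.cosh_pos (s*(2*y-1)); simp only [Pi.pow_apply]; positivity
  have hvc : Continuous fun y : ℝ => u (x₀ + y) := hcu.comp (continuous_const.add continuous_id)
  have hvc' : Continuous fun y : ℝ => deriv u (x₀ + y) := hcu'.comp (continuous_const.add continuous_id)
  have hF'cont : Continuous fun y : ℝ =>
      (2*u (x₀+y)*deriv u (x₀+y) * (Real.sinh (s*(2*y-1)) / (2*s*Real.cosh (s*(2*y-1))))
        + (u (x₀+y))^2 * (1/(Real.cosh (s*(2*y-1)))^2)) := by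
    exact ((((continuous_const.mul hvc).mul hvc').mul hH).add ((hvc.pow 2).mul hIc))
  have hFTC : (∫ y in (0:ℝ)..1,
        (2*u (x₀+y)*deriv u (x₀+y) * (Real.sinh (s*(2*y-1)) / (2*s*Real.cosh (s*(2*y-1))))
        + (u (x₀+y))^2 * (1/(Real.cosh (s*(2*y-1)))^2)))
      = (u (x₀+1))^2 * (Real.sinh (s*(2*1-1)) / (2*s*Real.cosh (s*(2*1-1))))
        - (u (x₀+0))^2 * (Real.sinh (s*(2*0-1)) / (2*s*Real.cosh (s*(2*0-1)))) :=
    intervalIntegral.integral_eq_sub_of_hasDerivAt (fun y _ => hF y)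
      (hF'cont.intervalIntegrable 0 1)
  have hEnd : (u (x₀+1))^2 * (Real.sinh (s*(2*1-1)) / (2*s*Real.cosh (s*(2*1-1))))
        - (u (x₀+0))^2 * (Real.sinh (s*(2*0-1)) / (2*s*Real.cosh (s*(2*0-1))))
      = (u x₀)^2 * (Real.sinh s / (s * Real.cosh s)) := by
    have h1 : s*(2*(1:ℝ)-1) = s := by ring
    have h0 : s*(2*(0:ℝ)-1) = -s := by ring
    rw [h1, h0, hp x₀, add_zero, Real.sinh_neg, Real.cosh_neg]
    have hcpos : 0 < Real.cosh s := Real.cosh_pos s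
    field_simp
    ring
  -- pointwise bound
  have hmono : (∫ y in (0:ℝ)..1,
        (2*u (x₀+y)*deriv u (x₀+y) * (Real.sinh (s*(2*y-1)) / (2*s*Real.cosh (s*(2*y-1))))
        + (u (x₀+y))^2 * (1/(Real.cosh (s*(2*y-1)))^2)))
      ≤ ∫ y in (0:ℝ)..1, ((u (x₀+y))^2 + μ/12 * (deriv u (x₀+y))^2) := by
    apply intervalIntegral.integral_mono_on (by norm_num)
      (hF'cont.intervalIntegrable 0 1)
      (((hvc.pow 2).add ((continuous_const.mul (hvc'.pow 2)))).intervalIntegrable 0 1)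
    intro y _
    simp only [Pi.add_apply, Pi.mul_apply, Pi.pow_apply]
    set a := u (x₀+y)
    set b := deriv u (x₀+y)
    set t := Real.sinh (s*(2*y-1))
    set c := Real.cosh (s*(2*y-1))
    have hcpos : 0 < c := Real.cosh_pos _
    have hct : c^2 - t^2 = 1 := Real.cosh_sq_sub_sinh_sq _
    have hμs : μ/12 = 1/(4*s^2) := by
      rw [hs2]
      rw [show (4:ℝ)*(3/μ) = 12/μ by ring, one_div_div]
    rw [hμs]
    have key : 4*s*(a*b)*(t*c) + 4*s^2*a^2 ≤ 4*s^2*a^2*c^2 + b^2*c^2 := by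
      nlinarith [sq_nonneg (2*s*(a*t) - b*c), sq_nonneg (s*a)]
    have e1 : 2*a*b*(t/(2*s*c)) + a^2*(1/c^2)
        = (4*s*(a*b)*(t*c) + 4*s^2*a^2)/(4*s^2*c^2) := by
      field_simp
    have e2 : a^2 + 1/(4*s^2)*b^2 = (4*s^2*a^2*c^2 + b^2*c^2)/(4*s^2*c^2) := by
      field_simp
    rw [e1, e2, div_le_div_iff_of_pos_right (by positivity)]
    exact key
  -- shift-invariance of the energy
  have hper2 : Function.Periodic (fun x => (u x)^2 + μ/12*(deriv u x)^2) 1 := by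
    intro x
    have hd : deriv u (x + 1) = deriv u x := by
      have : (fun y => u (y + 1)) = u := funext fun y => hp y
      calc deriv u (x + 1) = deriv (fun y => u (y + 1)) x := (deriv_comp_add_const u 1 x).symm
        _ = deriv u x := by rw [this]
    simp only [hp x, hd]
  have hshift : (∫ y in (0:ℝ)..1, ((u (x₀+y))^2 + μ/12 * (deriv u (x₀+y))^2)) = C₀ := by
    have h1 := intervalIntegral.integral_comp_add_left
      (fun x => (u x)^2 + μ/12*(deriv u x)^2) x₀ (a := (0:ℝ)) (b := (1:ℝ))
    have h2 := hper2.intervalIntegral_add_eq x₀ 0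
    simp only [add_zero, zero_add] at h1 h2 ⊢
    rw [h1, h2, hC]
  -- main energy bound
  have hA : (u x₀)^2 * (Real.sinh s / (s * Real.cosh s)) ≤ C₀ := by
    rw [← hEnd, ← hFTC, ← hshift]
    exact hmono
  -- hyperbolic inequality: 3 cosh s ≤ 13 s sinh s
  have hkey : 3 * Real.cosh s ≤ 13 * (s * Real.sinh s) := by
    have hsh : 0 ≤ Real.sinh s := Real.sinh_nonneg_iff.2 hs.le
    have hsub : 0 ≤ Real.sinh (s - 1/2) := Real.sinh_nonneg_iff.2 (by linarith)
    rw [Real.sinh_sub] at hsub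
    have hch : 0 < Real.cosh (1/2:ℝ) := Real.cosh_pos _
    have hchs : 0 < Real.cosh s := Real.cosh_pos _
    have he : 6 * Real.cosh (1/2:ℝ) ≤ 13 * Real.sinh (1/2:ℝ) := by
      rw [Real.cosh_eq, Real.sinh_eq, Real.exp_neg]
      have ha : 0 < Real.exp (1/2:ℝ) := Real.exp_pos _
      have ha2 : Real.exp (1/2:ℝ)^2 = Real.exp 1 := by
        rw [sq, ← Real.exp_add]; norm_num
      have hexp1 := Real.exp_one_gt_d9
      have h7 : (19:ℝ) ≤ 7 * Real.exp (1/2:ℝ)^2 := by nlinarith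
      have hinv : Real.exp (1/2:ℝ) * (Real.exp (1/2:ℝ))⁻¹ = 1 := mul_inv_cancel₀ ha.ne'
      nlinarith [ha, h7, hinv, mul_pos ha ha]
    have h13 : 6 * Real.cosh s ≤ 13 * Real.sinh s := by
      nlinarith [hsub, he, hch, hchs, hsh]
    nlinarith [h13, hsh, mul_nonneg (show (0:ℝ) ≤ s - 1/2 by linarith) hsh]
  -- conclude
  have hA' : (u x₀)^2 * Real.sinh s ≤ C₀ * (s * Real.cosh s) := by
    have hscpos : (0:ℝ) < s * Real.cosh s := by positivity
    have h := mul_le_mul_of_nonneg_right hA hscpos.le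
    rwa [mul_assoc, div_mul_cancel₀ _ hscpos.ne'] at h
  have h13μ : (13:ℝ)/μ = 13*s^2/3 := by rw [hs2]; field_simp
  rw [h13μ]
  nlinarith [hA', hkey, Real.cosh_pos s, hs, sq_nonneg (u x₀),
    Real.sinh_nonneg_iff.2 hs.le, Real.one_le_cosh s]

set_option maxHeartbeats 1000000 in
/-- Uniform bound on the periodic convolution `P∗g(u)` in terms of the energy
`C₀ = ∫₀¹ (u² + (μ/12)(u')²)`. -/
theorem stmt11 (ε μ C₀ : ℝ) (hε : 0 < ε) (hμ : 0 < μ) (hμ' : μ ≤ 12)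
    (u : ℝ → ℝ) (hu : ContDiff ℝ 1 u) (hp : Function.Periodic u 1)
    (hC : (∫ x in (0:ℝ)..1, ((u x)^2 + (μ/12) * (deriv u x)^2)) = C₀) :
    ∀ x ∈ Set.Icc (0:ℝ) 1,
      |pconv μ (gfun ε μ u (deriv u)) x|
        ≤ 2 * n2 μ * Real.sqrt C₀ + (5/2) * ε * ninf μ * C₀
          + (1/8) * ε^2 * ninf μ * Real.sqrt (13/μ) * (C₀ * Real.sqrt C₀)
          + (3/64) * ε^3 * ninf μ * (13/μ) * C₀^2
          + (7/4) * ε * ninf μ * C₀ := by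
  intro x _
  have hcu : Continuous u := hu.continuous
  have hcu' : Continuous (deriv u) := hu.continuous_deriv le_rfl
  have hC₀ : 0 ≤ C₀ := by
    rw [← hC]
    exact intervalIntegral.integral_nonneg (by norm_num) (fun y _ => by positivity)
  have hKmeas : Measurable (fun y : ℝ => P μ (x - y)) :=
    (measurable_P μ).comp (measurable_const.sub measurable_id)
  have hKbd : ∀ y : ℝ, |P μ (x - y)| ≤ ninf μ := fun y => abs_P_le_ninf hμ _
  have hninf : 0 ≤ ninf μ := ninf_nonneg hμ
  -- integrability of P(x - ·) * f for continuous f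
  have hKf : ∀ f : ℝ → ℝ, Continuous f →
      IntervalIntegrable (fun y => P μ (x - y) * f y) volume 0 1 := by
    intro f hf
    obtain ⟨Mf, hMf⟩ :=
      (isCompact_Icc (a := (0:ℝ)) (b := 1)).exists_bound_of_continuousOn hf.continuousOn
    apply bdd_meas_intable _ (ninf μ * Mf) (hKmeas.mul hf.measurable)
    intro y hy
    have hy' : y ∈ Set.Icc (0:ℝ) 1 := by
      rw [Set.uIoc_of_le (by norm_num : (0:ℝ) ≤ 1)] at hy
      exact ⟨hy.1.le, hy.2⟩
    have h2 := hMf y hy'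
    rw [Real.norm_eq_abs] at h2
    rw [Pi.mul_apply, abs_mul]
    exact mul_le_mul (hKbd y) h2 (abs_nonneg _) hninf
  have hK2 : IntervalIntegrable (fun y => (P μ (x - y))^2) volume 0 1 := by
    apply bdd_meas_intable _ ((ninf μ)^2) (hKmeas.pow_const 2)
    intro y _
    rw [abs_of_nonneg (sq_nonneg _), ← sq_abs]
    exact pow_le_pow_left₀ (abs_nonneg _) (hKbd y) 2
  have hiu2 : IntervalIntegrable (fun y => (u y)^2) volume 0 1 :=
    (hcu.pow 2).intervalIntegrable 0 1
  have hidu2 : IntervalIntegrable (fun y => (deriv u y)^2) volume 0 1 :=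
    (hcu'.pow 2).intervalIntegrable 0 1
  have hCsplit : (∫ y in (0:ℝ)..1, (u y)^2)
      + (μ/12)*(∫ y in (0:ℝ)..1, (deriv u y)^2) = C₀ := by
    rw [← intervalIntegral.integral_const_mul,
      ← intervalIntegral.integral_add hiu2 (hidu2.const_mul _)]
    exact hC
  have hu2pos : 0 ≤ ∫ y in (0:ℝ)..1, (u y)^2 :=
    intervalIntegral.integral_nonneg (by norm_num) (fun y _ => sq_nonneg _)
  have hdu2pos : 0 ≤ ∫ y in (0:ℝ)..1, (deriv u y)^2 :=
    intervalIntegral.integral_nonneg (by norm_num) (fun y _ => sq_nonneg _)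
  have hu2C : (∫ y in (0:ℝ)..1, (u y)^2) ≤ C₀ := by
    nlinarith [mul_nonneg (le_of_lt (show (0:ℝ) < μ/12 by positivity)) hdu2pos]
  have hdu2C : (∫ y in (0:ℝ)..1, (deriv u y)^2) ≤ 12/μ*C₀ := by
    rw [div_mul_eq_mul_div, le_div_iff₀ hμ]
    nlinarith
  have hsup2 : ∀ y : ℝ, (u y)^2 ≤ 13/μ*C₀ := sobolev μ C₀ hμ hμ' u hu hp hC
  have hsup : ∀ y : ℝ, |u y| ≤ Real.sqrt (13/μ) * Real.sqrt C₀ := by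
    intro y
    rw [show |u y| = Real.sqrt ((u y)^2) from (Real.sqrt_sq_eq_abs _).symm,
      ← Real.sqrt_mul (by positivity : (0:ℝ) ≤ 13/μ) C₀]
    exact Real.sqrt_le_sqrt (hsup2 y)
  -- generic bound for |∫ K f| with |f| ≤ b
  have hbound : ∀ f b : ℝ → ℝ, Continuous f → Continuous b →
      (∀ y ∈ Set.Icc (0:ℝ) 1, |f y| ≤ b y) →
      |∫ y in (0:ℝ)..1, P μ (x - y) * f y| ≤ ninf μ * ∫ y in (0:ℝ)..1, b y := by
    intro f b hf hb hfb
    have h1 : |∫ y in (0:ℝ)..1, P μ (x - y) * f y|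
        ≤ ∫ y in (0:ℝ)..1, |P μ (x - y) * f y| :=
      intervalIntegral.abs_integral_le_integral_abs (by norm_num)
    have h2 : (∫ y in (0:ℝ)..1, |P μ (x - y) * f y|)
        ≤ ∫ y in (0:ℝ)..1, ninf μ * b y := by
      apply intervalIntegral.integral_mono_on (by norm_num) ((hKf f hf).abs)
        ((continuous_const.mul hb).intervalIntegrable 0 1)
      intro y hy
      rw [abs_mul]
      have hb0 : 0 ≤ b y := le_trans (abs_nonneg _) (hfb y hy)
      exact mul_le_mul (hKbd y) (hfb y hy) (abs_nonneg _) hninf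
    rw [intervalIntegral.integral_const_mul] at h2
    linarith
  -- the five integral bounds
  have hI1 : |∫ y in (0:ℝ)..1, P μ (x - y) * u y| ≤ n2 μ * Real.sqrt C₀ := by
    have hcs := cs_int (fun y => P μ (x - y)) u hK2 hiu2 (hKf u hcu)
    have hKch : (∫ y in (0:ℝ)..1, (P μ (x - y))^2) = ∫ t in (0:ℝ)..1, (P μ t)^2 := by
      rw [intervalIntegral.integral_comp_sub_left (fun t => (P μ t)^2) x]
      have hper : Function.Periodic (fun t => (P μ t)^2) 1 := fun t => by
        simp only
        rw [P_periodic μ t]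
      have h2 := hper.intervalIntegral_add_eq (x - 1) 0
      simp only [zero_add] at h2
      rw [show x - (0:ℝ) = (x - 1) + 1 by ring, h2]
    rw [hKch] at hcs
    calc |∫ y in (0:ℝ)..1, P μ (x - y) * u y|
        ≤ n2 μ * Real.sqrt (∫ y in (0:ℝ)..1, (u y)^2) := hcs
      _ ≤ n2 μ * Real.sqrt C₀ :=
        mul_le_mul_of_nonneg_left (Real.sqrt_le_sqrt hu2C) (Real.sqrt_nonneg _)
  have hI2 : |∫ y in (0:ℝ)..1, P μ (x - y) * (u y)^2| ≤ ninf μ * C₀ := by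
    have h := hbound (fun y => (u y)^2) (fun y => (u y)^2) (hcu.pow 2) (hcu.pow 2)
      (fun y _ => by rw [abs_of_nonneg (sq_nonneg _)])
    exact h.trans (mul_le_mul_of_nonneg_left hu2C hninf)
  have hI3 : |∫ y in (0:ℝ)..1, P μ (x - y) * (u y)^3|
      ≤ ninf μ * (Real.sqrt (13/μ) * Real.sqrt C₀ * C₀) := by
    have h := hbound (fun y => (u y)^3)
      (fun y => (Real.sqrt (13/μ) * Real.sqrt C₀) * (u y)^2) (hcu.pow 3)
      (continuous_const.mul (hcu.pow 2)) ?_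
    · refine h.trans ?_
      rw [intervalIntegral.integral_const_mul]
      have hc0 : 0 ≤ Real.sqrt (13/μ) * Real.sqrt C₀ := by positivity
      have := mul_le_mul_of_nonneg_left hu2C hc0
      nlinarith [hninf]
    · intro y _
      rw [abs_pow, pow_succ, sq_abs]
      nlinarith [hsup y, sq_nonneg (u y), abs_nonneg (u y)]
  have hI4 : |∫ y in (0:ℝ)..1, P μ (x - y) * (u y)^4|
      ≤ ninf μ * (13/μ * C₀ * C₀) := by
    have h := hbound (fun y => (u y)^4) (fun y => (13/μ * C₀) * (u y)^2) (hcu.pow 4)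
      (continuous_const.mul (hcu.pow 2)) ?_
    · refine h.trans ?_
      rw [intervalIntegral.integral_const_mul]
      have hc0 : (0:ℝ) ≤ 13/μ * C₀ := by positivity
      have := mul_le_mul_of_nonneg_left hu2C hc0
      nlinarith [hninf]
    · intro y _
      rw [abs_of_nonneg (by positivity : (0:ℝ) ≤ (u y)^4),
        show (u y)^4 = ((u y)^2)^2 by ring]
      nlinarith [hsup2 y, sq_nonneg (u y)]
  have hI5 : |∫ y in (0:ℝ)..1, P μ (x - y) * (deriv u y)^2|
      ≤ ninf μ * (12/μ * C₀) := by
    have h := hbound (fun y => (deriv u y)^2) (fun y => (deriv u y)^2) (hcu'.pow 2)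
      (hcu'.pow 2) (fun y _ => by rw [abs_of_nonneg (sq_nonneg _)])
    exact h.trans (mul_le_mul_of_nonneg_left hdu2C hninf)
  -- split the convolution
  have hsplit : pconv μ (gfun ε μ u (deriv u)) x
      = 2*(∫ y in (0:ℝ)..1, P μ (x - y) * u y)
        + (5/2*ε)*(∫ y in (0:ℝ)..1, P μ (x - y) * (u y)^2)
        - (1/8*ε^2)*(∫ y in (0:ℝ)..1, P μ (x - y) * (u y)^3)
        + (3/64*ε^3)*(∫ y in (0:ℝ)..1, P μ (x - y) * (u y)^4)
        - (7/48*(ε*μ))*(∫ y in (0:ℝ)..1, P μ (x - y) * (deriv u y)^2) := by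
    have hi1 := hKf u hcu
    have hi2 := hKf (fun y => (u y)^2) (hcu.pow 2)
    have hi3 := hKf (fun y => (u y)^3) (hcu.pow 3)
    have hi4 := hKf (fun y => (u y)^4) (hcu.pow 4)
    have hi5 := hKf (fun y => (deriv u y)^2) (hcu'.pow 2)
    have e : (fun y => P μ (x - y) * (gfun ε μ u (deriv u) y))
        = fun y => 2*(P μ (x - y) * u y) + (5/2*ε)*(P μ (x - y) * (u y)^2)
          - (1/8*ε^2)*(P μ (x - y) * (u y)^3) + (3/64*ε^3)*(P μ (x - y) * (u y)^4)
          - (7/48*(ε*μ))*(P μ (x - y) * (deriv u y)^2) := by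
      funext y; unfold gfun; ring
    show (∫ y in (0:ℝ)..1, P μ (x - y) * gfun ε μ u (deriv u) y) = _
    rw [e,
      intervalIntegral.integral_sub
        ((((hi1.const_mul 2).add (hi2.const_mul _)).sub (hi3.const_mul _)).add
          (hi4.const_mul _)) (hi5.const_mul _),
      intervalIntegral.integral_add
        (((hi1.const_mul 2).add (hi2.const_mul _)).sub (hi3.const_mul _))
        (hi4.const_mul _),
      intervalIntegral.integral_sub ((hi1.const_mul 2).add (hi2.const_mul _))
        (hi3.const_mul _),
      intervalIntegral.integral_add (hi1.const_mul 2) (hi2.const_mul _),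
      intervalIntegral.integral_const_mul, intervalIntegral.integral_const_mul,
      intervalIntegral.integral_const_mul, intervalIntegral.integral_const_mul,
      intervalIntegral.integral_const_mul]
  rw [hsplit]
  set I1 := ∫ y in (0:ℝ)..1, P μ (x - y) * u y
  set I2 := ∫ y in (0:ℝ)..1, P μ (x - y) * (u y)^2
  set I3 := ∫ y in (0:ℝ)..1, P μ (x - y) * (u y)^3
  set I4 := ∫ y in (0:ℝ)..1, P μ (x - y) * (u y)^4
  set I5 := ∫ y in (0:ℝ)..1, P μ (x - y) * (deriv u y)^2
  have c1 : (0:ℝ) ≤ 5/2*ε := by positivity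
  have c2 : (0:ℝ) ≤ 1/8*ε^2 := by positivity
  have c3 : (0:ℝ) ≤ 3/64*ε^3 := by positivity
  have c4 : (0:ℝ) ≤ 7/48*(ε*μ) := by positivity
  calc |2*I1 + (5/2*ε)*I2 - (1/8*ε^2)*I3 + (3/64*ε^3)*I4 - (7/48*(ε*μ))*I5|
      ≤ 2*|I1| + (5/2*ε)*|I2| + (1/8*ε^2)*|I3| + (3/64*ε^3)*|I4| + (7/48*(ε*μ))*|I5| := by
        have t1 := abs_sub (2*I1 + (5/2*ε)*I2 - (1/8*ε^2)*I3 + (3/64*ε^3)*I4) ((7/48*(ε*μ))*I5)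
        have t2 := abs_add_le (2*I1 + (5/2*ε)*I2 - (1/8*ε^2)*I3) ((3/64*ε^3)*I4)
        have t3 := abs_sub (2*I1 + (5/2*ε)*I2) ((1/8*ε^2)*I3)
        have t4 := abs_add_le (2*I1) ((5/2*ε)*I2)
        have e1 : |2*I1| = 2*|I1| := by rw [abs_mul, abs_of_nonneg (by norm_num : (0:ℝ) ≤ 2)]
        have e2 : |(5/2*ε)*I2| = (5/2*ε)*|I2| := by rw [abs_mul, abs_of_nonneg c1]
        have e3 : |(1/8*ε^2)*I3| = (1/8*ε^2)*|I3| := by rw [abs_mul, abs_of_nonneg c2]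
        have e4 : |(3/64*ε^3)*I4| = (3/64*ε^3)*|I4| := by rw [abs_mul, abs_of_nonneg c3]
        have e5 : |(7/48*(ε*μ))*I5| = (7/48*(ε*μ))*|I5| := by rw [abs_mul, abs_of_nonneg c4]
        rw [e5] at t1
        rw [e4] at t2
        rw [e3] at t3
        rw [e1, e2] at t4
        linarith
    _ ≤ 2*(n2 μ * Real.sqrt C₀) + (5/2*ε)*(ninf μ * C₀)
        + (1/8*ε^2)*(ninf μ * (Real.sqrt (13/μ) * Real.sqrt C₀ * C₀))
        + (3/64*ε^3)*(ninf μ * (13/μ * C₀ * C₀))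
        + (7/48*(ε*μ))*(ninf μ * (12/μ * C₀)) := by
        apply add_le_add (add_le_add (add_le_add (add_le_add ?_ ?_) ?_) ?_) ?_
        · exact mul_le_mul_of_nonneg_left hI1 (by norm_num)
        · exact mul_le_mul_of_nonneg_left hI2 c1
        · exact mul_le_mul_of_nonneg_left hI3 c2
        · exact mul_le_mul_of_nonneg_left hI4 c3
        · exact mul_le_mul_of_nonneg_left hI5 c4
    _ = 2 * n2 μ * Real.sqrt C₀ + (5/2) * ε * ninf μ * C₀
          + (1/8) * ε^2 * ninf μ * Real.sqrt (13/μ) * (C₀ * Real.sqrt C₀)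
          + (3/64) * ε^3 * ninf μ * (13/μ) * C₀^2
          + (7/4) * ε * ninf μ * C₀ := by
        field_simp
        ring
end
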